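/- arXiv:0811.0503 — 3 statements merged into one kernel-verified Lean document; each statement's English description precedes it below -/
import Mathlib

section
/- Assume g satisfies condition G1. Let θ₀ = (μ₀,Σ₀) ∈ Θ and let A ⊆ ℝ^p be an open set with μ₀ ∈ A. Then for every θ ∈ Θ with θ ≠ θ₀ and every real k > 0, P_{θ₀}({x ∈ A : f_θ(x) ≠ k·f_{θ₀}(x)}) > 0. -/
open MeasureTheory Matrix Filter Set
open scoped RealInnerProductSpace ENNReal

noncomputable section

/-- The quadratic form `vᵀ S⁻¹ v`. -/
def quadForm {p : ℕ} (S : Matrix (Fin p) (Fin p) ℝ) (v : EuclideanSpace ℝ (Fin p)) : ℝ :=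
  ⟪v, Matrix.toEuclideanLin S⁻¹ v⟫

/-- The elliptical density `det(S)^{-1/2} g((x-μ)ᵀ S⁻¹ (x-μ))`. -/
def ellDensity {p : ℕ} (g : ℝ → ℝ) (μ : EuclideanSpace ℝ (Fin p))
    (S : Matrix (Fin p) (Fin p) ℝ) (x : EuclideanSpace ℝ (Fin p)) : ℝ :=
  (Real.sqrt S.det)⁻¹ * g (quadForm S (x - μ))

/-- The elliptical probability measure `P_θ`, `θ = (μ, S)`. -/
def ellMeasure {p : ℕ} (g : ℝ → ℝ) (μ : EuclideanSpace ℝ (Fin p))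
    (S : Matrix (Fin p) (Fin p) ℝ) : Measure (EuclideanSpace ℝ (Fin p)) :=
  volume.withDensity fun x => ENNReal.ofReal (ellDensity g μ S x)

/-- Condition G1: a strictly decreasing sequence tending to 0 on which `g` strictly increases. -/
def CondG1 (g : ℝ → ℝ) : Prop :=
  ∃ t : ℕ → ℝ, StrictAnti t ∧ Tendsto t atTop (nhds 0) ∧ (∀ n, 0 < t n) ∧
    ∀ n, g (t n) < g (t (n + 1))

namespace EllAux
variable {p : ℕ}

lemma quad_continuous (S : Matrix (Fin p) (Fin p) ℝ) : Continuous (quadForm S) := by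
  have h : Continuous (Matrix.toEuclideanLin S⁻¹) :=
    LinearMap.continuous_of_finiteDimensional _
  exact continuous_id.inner h

lemma quad_smul (S : Matrix (Fin p) (Fin p) ℝ) (c : ℝ) (v : EuclideanSpace ℝ (Fin p)) :
    quadForm S (c • v) = c ^ 2 * quadForm S v := by
  unfold quadForm
  rw [real_inner_smul_left, LinearMap.map_smul, real_inner_smul_right]
  ring

lemma quad_neg (S : Matrix (Fin p) (Fin p) ℝ) (v : EuclideanSpace ℝ (Fin p)) :
    quadForm S (-v) = quadForm S v := by
  unfold quadForm
  rw [LinearMap.map_neg, inner_neg_neg]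

lemma quad_zero (S : Matrix (Fin p) (Fin p) ℝ) : quadForm S 0 = 0 := by
  unfold quadForm
  rw [LinearMap.map_zero, inner_zero_right]

variable {S : Matrix (Fin p) (Fin p) ℝ} {R : EuclideanSpace ℝ (Fin p) ≃L[ℝ] EuclideanSpace ℝ (Fin p)}

section WithR
variable (hR : ∀ v, quadForm S v = ‖R v‖ ^ 2)
include hR

lemma quad_nonneg (v : EuclideanSpace ℝ (Fin p)) : 0 ≤ quadForm S v := by
  rw [hR]; exact sq_nonneg _

lemma quad_eq_zero_iff (v : EuclideanSpace ℝ (Fin p)) : quadForm S v = 0 ↔ v = 0 := by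
  rw [hR, pow_eq_zero_iff (two_ne_zero), norm_eq_zero]
  constructor
  · intro h
    have := R.map_eq_zero_iff.mp h
    exact this
  · intro h; rw [h, map_zero]

lemma quad_pos {v : EuclideanSpace ℝ (Fin p)} (hv : v ≠ 0) : 0 < quadForm S v :=
  lt_of_le_of_ne (quad_nonneg hR v) (fun h => hv ((quad_eq_zero_iff hR v).mp h.symm))

lemma quad_lt_iff (r : ℝ) (v : EuclideanSpace ℝ (Fin p)) :
    quadForm S v < r ↔ ‖R v‖ < Real.sqrt r := by
  rw [hR, Real.lt_sqrt (norm_nonneg _)]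

lemma quad_le_iff {r : ℝ} (hr : 0 ≤ r) (v : EuclideanSpace ℝ (Fin p)) :
    quadForm S v ≤ r ↔ ‖R v‖ ≤ Real.sqrt r := by
  rw [hR, Real.le_sqrt (norm_nonneg _) hr]

lemma quad_lower : ∃ α > (0:ℝ), ∀ v, α * ‖v‖ ^ 2 ≤ quadForm S v := by
  set c := max ‖(R.symm : EuclideanSpace ℝ (Fin p) →L[ℝ] EuclideanSpace ℝ (Fin p))‖ 1 with hc
  have hc1 : (1:ℝ) ≤ c := le_max_right _ _
  have hcpos : (0:ℝ) < c := lt_of_lt_of_le one_pos hc1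
  refine ⟨(c ^ 2)⁻¹, by positivity, fun v => ?_⟩
  have h1 : ‖v‖ ≤ c * ‖R v‖ := by
    have h2 : ‖R.symm (R v)‖ ≤ ‖(R.symm : EuclideanSpace ℝ (Fin p) →L[ℝ] EuclideanSpace ℝ (Fin p))‖ * ‖R v‖ :=
      (R.symm : EuclideanSpace ℝ (Fin p) →L[ℝ] EuclideanSpace ℝ (Fin p)).le_opNorm (R v)
    have h3 : R.symm (R v) = v := R.symm_apply_apply v
    calc ‖v‖ = ‖R.symm (R v)‖ := by rw [h3]
    _ ≤ ‖(R.symm : EuclideanSpace ℝ (Fin p) →L[ℝ] EuclideanSpace ℝ (Fin p))‖ * ‖R v‖ := h2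
    _ ≤ c * ‖R v‖ := by
        apply mul_le_mul_of_nonneg_right (le_max_left _ _) (norm_nonneg _)
  have h4 : ‖v‖ ^ 2 ≤ c ^ 2 * ‖R v‖ ^ 2 := by
    have := mul_self_le_mul_self (norm_nonneg v) h1
    calc ‖v‖ ^ 2 = ‖v‖ * ‖v‖ := sq ‖v‖
    _ ≤ (c * ‖R v‖) * (c * ‖R v‖) := this
    _ = c ^ 2 * ‖R v‖ ^ 2 := by ring
  rw [hR]
  rw [inv_mul_le_iff₀ (by positivity)]
  linarith

end WithR

lemma ell_isOpen (S : Matrix (Fin p) (Fin p) ℝ) (m : EuclideanSpace ℝ (Fin p)) (r : ℝ) :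
    IsOpen {x | quadForm S (x - m) < r} :=
  isOpen_lt ((quad_continuous S).comp (continuous_id.sub continuous_const)) continuous_const

lemma ellC_isClosed (S : Matrix (Fin p) (Fin p) ℝ) (m : EuclideanSpace ℝ (Fin p)) (r : ℝ) :
    IsClosed {x | quadForm S (x - m) ≤ r} :=
  isClosed_le ((quad_continuous S).comp (continuous_id.sub continuous_const)) continuous_const

section WithR2
variable (hR : ∀ v, quadForm S v = ‖R v‖ ^ 2)
include hR

lemma ell_convex (m : EuclideanSpace ℝ (Fin p)) (r : ℝ) :
    Convex ℝ {x | quadForm S (x - m) < r} := by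
  intro x hx y hy a b ha hb hab
  simp only [mem_setOf_eq] at hx hy ⊢
  rw [quad_lt_iff hR] at hx hy ⊢
  have key : a • x + b • y - m = a • (x - m) + b • (y - m) := by
    calc a • x + b • y - m = a • x + b • y - (a + b) • m := by rw [hab, one_smul]
    _ = a • (x - m) + b • (y - m) := by rw [add_smul, smul_sub, smul_sub]; abel
  rw [key, map_add, _root_.map_smul, _root_.map_smul]
  calc ‖a • R (x - m) + b • R (y - m)‖ ≤ ‖a • R (x - m)‖ + ‖b • R (y - m)‖ := norm_add_le _ _
  _ = a * ‖R (x - m)‖ + b * ‖R (y - m)‖ := by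
      rw [norm_smul, norm_smul, Real.norm_of_nonneg ha, Real.norm_of_nonneg hb]
  _ < a * Real.sqrt r + b * Real.sqrt r := by
      rcases eq_or_lt_of_le ha with h0 | h0
      · rcases eq_or_lt_of_le hb with h0' | h0'
        · exfalso; rw [← h0, ← h0'] at hab; norm_num at hab
        · rw [← h0]; simpa using mul_lt_mul_of_pos_left hy h0'
      · rcases eq_or_lt_of_le hb with h0' | h0'
        · rw [← h0']; simpa using mul_lt_mul_of_pos_left hx h0
        · exact add_lt_add (mul_lt_mul_of_pos_left hx h0) (mul_lt_mul_of_pos_left hy h0')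
  _ = Real.sqrt r := by rw [← add_mul, hab, one_mul]

lemma closure_ell (m : EuclideanSpace ℝ (Fin p)) {r : ℝ} (hr : 0 < r) :
    closure {x | quadForm S (x - m) < r} = {x | quadForm S (x - m) ≤ r} := by
  set F : EuclideanSpace ℝ (Fin p) ≃ₜ EuclideanSpace ℝ (Fin p) :=
    (Homeomorph.addRight (-m)).trans R.toHomeomorph with hF
  have hFx : ∀ x, F x = R (x - m) := fun x => by
    simp [hF, sub_eq_add_neg]
  have h1 : {x | quadForm S (x - m) < r} = F ⁻¹' Metric.ball 0 (Real.sqrt r) := by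
    ext x
    simp only [mem_setOf_eq, mem_preimage, Metric.mem_ball, dist_zero_right, hFx]
    exact quad_lt_iff hR r (x - m)
  have h2 : {x | quadForm S (x - m) ≤ r} = F ⁻¹' Metric.closedBall 0 (Real.sqrt r) := by
    ext x
    simp only [mem_setOf_eq, mem_preimage, Metric.mem_closedBall, dist_zero_right, hFx]
    exact quad_le_iff hR hr.le (x - m)
  rw [h1, h2, ← F.preimage_closure, closure_ball 0 (Real.sqrt_pos.mpr hr).ne']

lemma boundary_null (hp : 1 ≤ p) (m : EuclideanSpace ℝ (Fin p)) (r : ℝ) :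
    volume {x | quadForm S (x - m) = r} = 0 := by
  haveI : Nonempty (Fin p) := ⟨⟨0, hp⟩⟩
  haveI : Nontrivial (EuclideanSpace ℝ (Fin p)) := inferInstance
  have htrans : {x | quadForm S (x - m) = r} = (fun x => x + -m) ⁻¹' {v | quadForm S v = r} := by
    ext x; simp [sub_eq_add_neg]
  rw [htrans, measure_preimage_add_right]
  rcases lt_trichotomy r 0 with h | h | h
  · have : {v | quadForm S v = r} = ∅ := by
      ext v; simp only [mem_setOf_eq, mem_empty_iff_false, iff_false]
      intro hv; exact absurd (hv ▸ quad_nonneg hR v) (not_le.mpr h)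
    rw [this, measure_empty]
  · have : {v | quadForm S v = r} = {0} := by
      ext v; rw [mem_setOf_eq, mem_singleton_iff, h, quad_eq_zero_iff hR]
    rw [this, measure_singleton]
  · have hset : {v | quadForm S v = r} = ⇑R ⁻¹' Metric.sphere 0 (Real.sqrt r) := by
      ext v
      simp only [mem_setOf_eq, mem_preimage, Metric.mem_sphere, dist_zero_right]
      rw [hR]
      constructor
      · intro hv; rw [← hv, Real.sqrt_sq (norm_nonneg _)]
      · intro hv; rw [hv, Real.sq_sqrt h.le]
    have himg : ⇑R ⁻¹' Metric.sphere 0 (Real.sqrt r) = ⇑R.symm '' Metric.sphere 0 (Real.sqrt r) := by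
      ext x
      simp only [mem_preimage, mem_image]
      constructor
      · intro hx; exact ⟨R x, hx, R.symm_apply_apply x⟩
      · rintro ⟨y, hy, rfl⟩; rwa [R.apply_symm_apply]
    rw [hset, himg]
    have := Measure.addHaar_image_linearMap (volume : Measure (EuclideanSpace ℝ (Fin p)))
      (R.symm : EuclideanSpace ℝ (Fin p) →ₗ[ℝ] EuclideanSpace ℝ (Fin p))
      (Metric.sphere 0 (Real.sqrt r))
    have hcoe : (⇑(R.symm : EuclideanSpace ℝ (Fin p) →ₗ[ℝ] EuclideanSpace ℝ (Fin p)) : EuclideanSpace ℝ (Fin p) → EuclideanSpace ℝ (Fin p)) = ⇑R.symm := rfl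
    rw [hcoe] at this
    rw [this, Measure.addHaar_sphere, mul_zero]

end WithR2

lemma null_open_empty {U : Set (EuclideanSpace ℝ (Fin p))} (hU : IsOpen U)
    (h : volume U = 0) : U = ∅ := by
  by_contra hne
  exact absurd h (hU.measure_pos volume (Set.nonempty_iff_ne_empty.mpr hne)).ne'

lemma ae_open_subset_closure {U V : Set (EuclideanSpace ℝ (Fin p))} (hU : IsOpen U)
    (h : volume (U \ V) = 0) : U ⊆ closure V := by
  intro x hx
  by_contra hxc
  have hopen : IsOpen (U \ closure V) := hU.sdiff isClosed_closure
  have hsub : U \ closure V ⊆ U \ V := by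
    intro y hy
    rw [mem_diff] at hy ⊢
    exact ⟨hy.1, fun hyV => hy.2 (subset_closure hyV)⟩
  have hnull : volume (U \ closure V) = 0 := measure_mono_null hsub h
  have := null_open_empty hopen hnull
  rw [eq_empty_iff_forall_notMem] at this
  exact this x ⟨hx, hxc⟩


lemma radius_lt_absurd (hp : 1 ≤ p) (hR : ∀ v, quadForm S v = ‖R v‖ ^ 2)
    (m : EuclideanSpace ℝ (Fin p)) {a b : ℝ} (ha : 0 ≤ a) (hab : a < b)
    (h : volume {x | quadForm S (x - m) < b ∧ ¬ quadForm S (x - m) < a} = 0) : False := by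
  set e : EuclideanSpace ℝ (Fin p) := EuclideanSpace.single (⟨0, hp⟩ : Fin p) (1:ℝ) with he_def
  have he : e ≠ 0 := by
    intro h0
    have h1 : e (⟨0, hp⟩ : Fin p) = 1 := by simp [he_def]
    rw [h0] at h1
    norm_num at h1
  have hqe : 0 < quadForm S e := quad_pos hR he
  set mid := (a + b) / 2 with hmid
  have hmid_pos : 0 ≤ mid := by rw [hmid]; linarith
  set s := Real.sqrt (mid / quadForm S e) with hs
  set x := m + s • e with hx_def
  have hx : quadForm S (x - m) = mid := by
    rw [hx_def, add_sub_cancel_left, quad_smul, hs, Real.sq_sqrt (by positivity)]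
    field_simp
  have hDopen : IsOpen ({y | a < quadForm S (y - m)} ∩ {y | quadForm S (y - m) < b}) := by
    apply IsOpen.inter
    · exact isOpen_lt continuous_const ((quad_continuous S).comp (continuous_id.sub continuous_const))
    · exact ell_isOpen S m b
  have hmem : x ∈ {y | a < quadForm S (y - m)} ∩ {y | quadForm S (y - m) < b} := by
    constructor <;> simp only [mem_setOf_eq, hx] <;> rw [hmid] <;> linarith
  have hsub : ({y | a < quadForm S (y - m)} ∩ {y | quadForm S (y - m) < b}) ⊆
      {x | quadForm S (x - m) < b ∧ ¬ quadForm S (x - m) < a} := by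
    rintro y ⟨hy1, hy2⟩
    exact ⟨hy2, not_lt.mpr (le_of_lt hy1)⟩
  exact absurd (measure_mono_null hsub h) (hDopen.measure_pos volume ⟨x, hmem⟩).ne'

lemma radius_unique (hp : 1 ≤ p) (hR : ∀ v, quadForm S v = ‖R v‖ ^ 2)
    (m : EuclideanSpace ℝ (Fin p)) {a b : ℝ} (ha : 0 ≤ a) (hb : 0 ≤ b)
    (h : volume {x | ¬ (quadForm S (x - m) < a ↔ quadForm S (x - m) < b)} = 0) : a = b := by
  rcases lt_trichotomy a b with hlt | heq | hgt
  · exfalso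
    apply radius_lt_absurd hp hR m ha hlt
    apply measure_mono_null _ h
    rintro y ⟨hy1, hy2⟩
    simp only [mem_setOf_eq]
    intro hiff
    exact hy2 (hiff.mpr hy1)
  · exact heq
  · exfalso
    apply radius_lt_absurd hp hR m hb hgt
    apply measure_mono_null _ h
    rintro y ⟨hy1, hy2⟩
    simp only [mem_setOf_eq]
    intro hiff
    exact hy2 (hiff.mp hy1)

lemma quad_determines {S₀ : Matrix (Fin p) (Fin p) ℝ} (hS : S.PosDef) (hS₀ : S₀.PosDef)
    (h : ∀ v, quadForm S v = quadForm S₀ v) : S = S₀ := by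
  have hsym : LinearMap.IsSymmetric (Matrix.toEuclideanLin (S⁻¹ - S₀⁻¹)) :=
    isHermitian_iff_isSymmetric.mp (hS.inv.1.sub hS₀.inv.1)
  have hzero : ∀ x, ⟪Matrix.toEuclideanLin (S⁻¹ - S₀⁻¹) x, x⟫ = 0 := by
    intro x
    have hx : ⟪x, Matrix.toEuclideanLin (S⁻¹ - S₀⁻¹) x⟫ = 0 := by
      rw [map_sub, LinearMap.sub_apply, inner_sub_right]
      have := h x
      unfold quadForm at this
      rw [this]; ring
    rw [real_inner_comm]; exact hx
  have hD : Matrix.toEuclideanLin (S⁻¹ - S₀⁻¹) = 0 :=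
    hsym.inner_map_self_eq_zero.mp hzero
  have hinv : S⁻¹ = S₀⁻¹ := by
    have h0 : (S⁻¹ - S₀⁻¹ : Matrix (Fin p) (Fin p) ℝ) = 0 := by
      apply Matrix.toEuclideanLin.injective
      rw [hD, map_zero]
    exact sub_eq_zero.mp h0
  have hS_unit : IsUnit S.det := hS.det_pos.ne'.isUnit
  have hS₀_unit : IsUnit S₀.det := hS₀.det_pos.ne'.isUnit
  calc S = S⁻¹⁻¹ := (Matrix.nonsing_inv_nonsing_inv S hS_unit).symm
  _ = S₀⁻¹⁻¹ := by rw [hinv]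
  _ = S₀ := Matrix.nonsing_inv_nonsing_inv S₀ hS₀_unit

end EllAux

namespace EllAux

/-- The "radius" of the superlevel set `{s ≥ 0 | g s > c}`. -/
def philev (g : ℝ → ℝ) (c : ℝ) : ℝ := sSup {s : ℝ | 0 ≤ s ∧ c < g s}

lemma philev_nonneg (g : ℝ → ℝ) (c : ℝ) : 0 ≤ philev g c :=
  Real.sSup_nonneg fun _ hx => hx.1

lemma le_philev {g : ℝ → ℝ} {c s : ℝ} (hbdd : BddAbove {s : ℝ | 0 ≤ s ∧ c < g s})
    (hs : 0 ≤ s) (h : c < g s) : s ≤ philev g c :=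
  le_csSup hbdd ⟨hs, h⟩

lemma lt_of_lt_philev {g : ℝ → ℝ} (hmono : AntitoneOn g (Set.Ici 0)) {c s : ℝ}
    (hs : 0 ≤ s) (h : s < philev g c) : c < g s := by
  have hne : {s : ℝ | 0 ≤ s ∧ c < g s}.Nonempty := by
    by_contra hne
    rw [Set.not_nonempty_iff_eq_empty] at hne
    rw [philev, hne, Real.sSup_empty] at h
    exact absurd hs (not_le.mpr h)
  obtain ⟨s', hs', hlt⟩ := exists_lt_of_lt_csSup hne h
  exact lt_of_lt_of_le hs'.2 (hmono hs hs'.1 hlt.le)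

lemma philev_le {g : ℝ → ℝ} (hmono : AntitoneOn g (Set.Ici 0)) {c s₀ : ℝ}
    (hs₀ : 0 ≤ s₀) (h : g s₀ ≤ c) : philev g c ≤ s₀ := by
  apply Real.sSup_le _ hs₀
  intro x hx
  by_contra hx'
  push_neg at hx'
  exact absurd (lt_of_le_of_lt (le_trans (hmono hs₀ (le_trans hs₀ hx'.le) hx'.le) h) hx.2) (lt_irrefl _)

end EllAux

namespace EllAux

lemma null_of_ae_iff {α : Type*} [MeasurableSpace α] {μ : Measure α} {P Q : α → Prop}
    (h : ∀ᵐ x ∂μ, P x ↔ Q x) (hP : μ {x | P x} = 0) : μ {x | Q x} = 0 := by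
  have hsub : {x | Q x} ⊆ {x | ¬ (P x ↔ Q x)} ∪ {x | P x} := by
    intro x hx
    by_cases hPx : P x
    · exact Or.inr hPx
    · exact Or.inl fun hiff => hPx (hiff.mpr hx)
  exact measure_mono_null hsub (measure_union_null (ae_iff.mp h) hP)

lemma posdef_rep {p : ℕ} {S : Matrix (Fin p) (Fin p) ℝ} (hS : S.PosDef) :
    ∃ R : EuclideanSpace ℝ (Fin p) ≃L[ℝ] EuclideanSpace ℝ (Fin p),
      ∀ v, quadForm S v = ‖R v‖ ^ 2 := by
  have hA : (S⁻¹).PosDef := hS.inv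
  have hAs : (S⁻¹).PosSemidef := hA.posSemidef
  obtain ⟨B, hB, hBB⟩ : ∃ B : Matrix (Fin p) (Fin p) ℝ, B.PosSemidef ∧ B * B = S⁻¹ := by
    open scoped MatrixOrder in
    exact ⟨CFC.sqrt S⁻¹, (CFC.sqrt_nonneg _).posSemidef, CFC.sqrt_mul_sqrt_self _ hAs.nonneg⟩
  have hdet : IsUnit B.det := by
    have h2 : B.det * B.det = (S⁻¹).det := by rw [← det_mul, hBB]
    have h3 : (S⁻¹).det ≠ 0 := hA.det_pos.ne'
    have hBd : B.det ≠ 0 := fun h => h3 (by rw [← h2, h, mul_zero])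
    exact hBd.isUnit
  have h1 : B * B⁻¹ = 1 := mul_nonsing_inv B hdet
  have h2 : B⁻¹ * B = 1 := nonsing_inv_mul B hdet
  have hmul : ∀ (M N : Matrix (Fin p) (Fin p) ℝ),
      toEuclideanLin (M * N) = (toEuclideanLin M).comp (toEuclideanLin N) := by
    intro M N
    simp [toEuclideanLin_eq_toLin, Matrix.toLin_mul _ (PiLp.basisFun 2 ℝ (Fin p)) _]
  have hone : toEuclideanLin (1 : Matrix (Fin p) (Fin p) ℝ) = LinearMap.id := by
    simp [toEuclideanLin_eq_toLin]
  let le : EuclideanSpace ℝ (Fin p) ≃ₗ[ℝ] EuclideanSpace ℝ (Fin p) :=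
    LinearEquiv.ofLinear (toEuclideanLin B) (toEuclideanLin B⁻¹)
      (by rw [← hmul, h1, hone]) (by rw [← hmul, h2, hone])
  refine ⟨le.toContinuousLinearEquiv, fun v => ?_⟩
  have hsym : LinearMap.IsSymmetric (toEuclideanLin B) :=
    isHermitian_iff_isSymmetric.mp hB.1
  have hq : quadForm S v = ⟪toEuclideanLin B v, toEuclideanLin B v⟫ := by
    rw [quadForm, ← hBB, hmul]
    exact (hsym v (toEuclideanLin B v)).symm
  rw [hq]
  have hle : (le.toContinuousLinearEquiv : EuclideanSpace ℝ (Fin p) → _) v = toEuclideanLin B v := rfl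
  rw [hle, real_inner_self_eq_norm_sq]

end EllAux

open EllAux

set_option maxHeartbeats 4000000 in
theorem ell_identifiable_on_open {p : ℕ} (hp : 1 ≤ p) (g : ℝ → ℝ)
    (hmono : AntitoneOn g (Set.Ici 0))
    (hnorm : ∫ x : EuclideanSpace ℝ (Fin p), g (‖x‖ ^ 2) = 1)
    (hG1 : CondG1 g)
    (μ₀ : EuclideanSpace ℝ (Fin p)) (S₀ : Matrix (Fin p) (Fin p) ℝ) (hS₀ : S₀.PosDef)
    (A : Set (EuclideanSpace ℝ (Fin p))) (hA : IsOpen A) (hμ₀ : μ₀ ∈ A)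
    (μ : EuclideanSpace ℝ (Fin p)) (S : Matrix (Fin p) (Fin p) ℝ) (hS : S.PosDef)
    (hne : (μ, S) ≠ (μ₀, S₀)) (k : ℝ) (hk : 0 < k) :
    0 < ellMeasure g μ₀ S₀
      {x | x ∈ A ∧ ellDensity g μ S x ≠ k * ellDensity g μ₀ S₀ x} := by
  haveI : Nonempty (Fin p) := ⟨⟨0, hp⟩⟩
  haveI : Nontrivial (EuclideanSpace ℝ (Fin p)) := inferInstance
  by_contra h0
  rw [not_lt, le_zero_iff] at h0
  -- G1 data
  obtain ⟨t, ht_anti, ht_lim, ht_pos, ht_incr⟩ := hG1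
  set γ : ℕ → ℝ := fun n => g (t n) with hγdef
  have hγ_mono : StrictMono γ := strictMono_nat_of_lt_succ ht_incr
  have hγ_bdd : ∀ n, γ n ≤ g 0 := fun n => hmono (show (0:ℝ) ∈ Set.Ici 0 from le_refl (0:ℝ)) (ht_pos n).le (ht_pos n).le
  -- integrability
  have hInt : Integrable (fun x : EuclideanSpace ℝ (Fin p) => g (‖x‖ ^ 2)) := by
    by_contra hni
    rw [integral_undef hni] at hnorm
    norm_num at hnorm
  have hvol_univ : volume (univ : Set (EuclideanSpace ℝ (Fin p))) = ∞ :=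
    measure_univ_of_isAddLeftInvariant (volume : Measure (EuclideanSpace ℝ (Fin p)))
  have hbddlev : ∀ c : ℝ, 0 < c → BddAbove {s : ℝ | 0 ≤ s ∧ c < g s} := by
    intro c hc
    by_contra hnb
    have hall : ∀ x : EuclideanSpace ℝ (Fin p), c < g (‖x‖ ^ 2) := by
      intro x
      obtain ⟨s', hs', hgt⟩ := not_bddAbove_iff.mp hnb (‖x‖ ^ 2)
      exact lt_of_lt_of_le hs'.2 (hmono (sq_nonneg ‖x‖) hs'.1 hgt.le)
    have hlow : ∀ x : EuclideanSpace ℝ (Fin p),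
        ENNReal.ofReal c ≤ (‖g (‖x‖ ^ 2)‖₊ : ℝ≥0∞) := fun x =>
      le_trans (ENNReal.ofReal_le_ofReal (hall x).le) (Real.ofReal_le_enorm _)
    have hmono' : (∫⁻ x : EuclideanSpace ℝ (Fin p), ENNReal.ofReal c)
        ≤ ∫⁻ x : EuclideanSpace ℝ (Fin p), (‖g (‖x‖ ^ 2)‖₊ : ℝ≥0∞) := lintegral_mono hlow
    rw [lintegral_const, hvol_univ, ENNReal.mul_top (ENNReal.ofReal_pos.mpr hc).ne'] at hmono'
    exact absurd (lt_of_le_of_lt hmono' hInt.2) (lt_irrefl _)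
  -- the supremum of γ
  have hγ_bddAbove : BddAbove (Set.range γ) := by
    refine ⟨g 0, ?_⟩
    rintro _ ⟨n, rfl⟩
    exact hγ_bdd n
  set γs := ⨆ n, γ n with hγs
  have hγ_le : ∀ n, γ n ≤ γs := fun n => le_ciSup hγ_bddAbove n
  have hγ_tendsto : Tendsto γ atTop (nhds γs) := tendsto_atTop_ciSup hγ_mono.monotone hγ_bddAbove
  have hg_lt_sup : ∀ s : ℝ, 0 < s → g s < γs := by
    intro s hs
    obtain ⟨n, hn⟩ := (ht_lim.eventually_lt_const hs).exists
    exact lt_of_le_of_lt (hmono (ht_pos n).le hs.le hn.le)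
      (lt_of_lt_of_le (hγ_mono (Nat.lt_succ_self n)) (hγ_le (n + 1)))
  -- existence of positive value
  have hN : ∃ N, 0 < γ N := by
    by_contra hno
    push_neg at hno
    have hle : ∀ᵐ x : EuclideanSpace ℝ (Fin p), g (‖x‖ ^ 2) ≤ 0 := by
      have hsing : volume ({0} : Set (EuclideanSpace ℝ (Fin p))) = 0 := measure_singleton 0
      filter_upwards [measure_eq_zero_iff_ae_notMem.mp hsing] with x hx
      have hxne : x ≠ 0 := fun h => hx (by rw [h]; exact rfl)
      have hxpos : 0 < ‖x‖ ^ 2 := by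
        have := norm_pos_iff.mpr hxne
        positivity
      obtain ⟨n, hn⟩ := (ht_lim.eventually_lt_const hxpos).exists
      exact le_trans (hmono (ht_pos n).le (sq_nonneg ‖x‖) hn.le) (hno n)
    have hint := integral_nonpos_of_ae hle
    rw [hnorm] at hint
    norm_num at hint
  obtain ⟨N, hγN⟩ := hN
  have hγpos : ∀ n, N ≤ n → 0 < γ n := fun n hn => lt_of_lt_of_le hγN (hγ_mono.monotone hn)
  have hγs_pos : 0 < γs := lt_of_lt_of_le hγN (hγ_le N)
  -- geometry
  obtain ⟨R₀, hR₀⟩ := posdef_rep hS₀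
  obtain ⟨R, hR⟩ := posdef_rep hS
  obtain ⟨α₀, hα₀pos, hα₀⟩ := quad_lower hR₀
  obtain ⟨ε, hεpos, hεA⟩ := Metric.isOpen_iff.mp hA μ₀ hμ₀
  set ρ := min (α₀ * ε ^ 2) (t N) with hρdef
  have hρpos : 0 < ρ := lt_min (by positivity) (ht_pos N)
  set B := {x : EuclideanSpace ℝ (Fin p) | quadForm S₀ (x - μ₀) < ρ} with hBdef
  have hBopen : IsOpen B := ell_isOpen S₀ μ₀ ρ
  have hμ₀B : μ₀ ∈ B := by
    show quadForm S₀ (μ₀ - μ₀) < ρ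
    rw [sub_self, quad_zero]
    exact hρpos
  have hBA : B ⊆ A := by
    intro x hx
    apply hεA
    rw [Metric.mem_ball, dist_eq_norm]
    have hxB : quadForm S₀ (x - μ₀) < ρ := hx
    have h1 : α₀ * ‖x - μ₀‖ ^ 2 < α₀ * ε ^ 2 :=
      lt_of_le_of_lt (hα₀ _) (lt_of_lt_of_le hxB (min_le_left _ _))
    have h2 : ‖x - μ₀‖ ^ 2 < ε ^ 2 := lt_of_mul_lt_mul_left h1 hα₀pos.le
    nlinarith [norm_nonneg (x - μ₀)]
  -- density positivity on B
  have hd₀pos : 0 < Real.sqrt S₀.det := Real.sqrt_pos.mpr hS₀.det_pos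
  have hdpos : 0 < Real.sqrt S.det := Real.sqrt_pos.mpr hS.det_pos
  have hdens : ∀ x ∈ B, 0 < ellDensity g μ₀ S₀ x := by
    intro x hx
    apply mul_pos (inv_pos.mpr hd₀pos)
    have hxB : quadForm S₀ (x - μ₀) < ρ := hx
    have hle : quadForm S₀ (x - μ₀) ≤ t N := le_trans hxB.le (min_le_right _ _)
    exact lt_of_lt_of_le hγN (hmono (quad_nonneg hR₀ _) (ht_pos N).le hle)
  -- measurability of densities
  set gm : ℝ → ℝ := fun s => g (max s 0) with hgmdef
  have hgm_anti : Antitone gm := fun s s' hss =>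
    hmono (le_max_right s 0) (le_max_right s' 0) (max_le_max hss (le_refl 0))
  have hgm_meas : Measurable gm := hgm_anti.measurable
  have hdens_eq : ∀ (m : EuclideanSpace ℝ (Fin p)) (S' : Matrix (Fin p) (Fin p) ℝ)
      (R' : EuclideanSpace ℝ (Fin p) ≃L[ℝ] EuclideanSpace ℝ (Fin p))
      (hR' : ∀ v, quadForm S' v = ‖R' v‖ ^ 2),
      (fun x => ellDensity g m S' x)
        = fun x => (Real.sqrt S'.det)⁻¹ * gm (quadForm S' (x - m)) := by
    intro m S' R' hR'
    funext x
    rw [ellDensity, hgmdef]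
    simp only
    rw [max_eq_left (quad_nonneg hR' _)]
  have hdens_meas : ∀ (m : EuclideanSpace ℝ (Fin p)) (S' : Matrix (Fin p) (Fin p) ℝ)
      (R' : EuclideanSpace ℝ (Fin p) ≃L[ℝ] EuclideanSpace ℝ (Fin p))
      (hR' : ∀ v, quadForm S' v = ‖R' v‖ ^ 2),
      Measurable fun x => ellDensity g m S' x := by
    intro m S' R' hR'
    rw [hdens_eq m S' R' hR']
    exact measurable_const.mul (hgm_meas.comp
      ((quad_continuous S').comp (continuous_id.sub continuous_const)).measurable)
  -- extract a.e. equality on B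
  have hw₀meas : Measurable fun x => ENNReal.ofReal (ellDensity g μ₀ S₀ x) :=
    (hdens_meas μ₀ S₀ R₀ hR₀).ennreal_ofReal
  rw [ellMeasure, withDensity_apply_eq_zero hw₀meas] at h0
  have hae := measure_eq_zero_iff_ae_notMem.mp h0
  have hEq : ∀ᵐ x, x ∈ B → ellDensity g μ S x = k * ellDensity g μ₀ S₀ x := by
    filter_upwards [hae] with x hx hxB
    by_contra hne'
    apply hx
    constructor
    · exact (ENNReal.ofReal_pos.mpr (hdens x hxB)).ne'
    · exact ⟨hBA hxB, hne'⟩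
  set K := k * Real.sqrt S.det / Real.sqrt S₀.det with hKdef
  have hKpos : 0 < K := by positivity
  have hE : ∀ᵐ x, x ∈ B →
      g (quadForm S (x - μ)) = K * g (quadForm S₀ (x - μ₀)) := by
    filter_upwards [hEq] with x hx hxB
    have h1 := hx hxB
    rw [ellDensity, ellDensity] at h1
    rw [hKdef]
    field_simp at h1 ⊢
    linarith
  -- superlevel iff
  have hlev' : ∀ c : ℝ, ∀ᵐ x,
      ((x ∈ B ∧ K * c < g (quadForm S (x - μ))) ↔
        (x ∈ B ∧ c < g (quadForm S₀ (x - μ₀)))) := by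
    intro c
    filter_upwards [hE] with x hx
    constructor
    · rintro ⟨hxB, hlt⟩
      refine ⟨hxB, ?_⟩
      rw [hx hxB] at hlt
      exact lt_of_mul_lt_mul_left hlt hKpos.le
    · rintro ⟨hxB, hlt⟩
      refine ⟨hxB, ?_⟩
      rw [hx hxB]
      exact (mul_lt_mul_iff_right₀ hKpos).mpr hlt
  have hlev : ∀ c : ℝ, 0 < c → ∀ᵐ x,
      ((x ∈ B ∧ quadForm S (x - μ) < philev g (K * c)) ↔
        (x ∈ B ∧ quadForm S₀ (x - μ₀) < philev g c)) := by
    intro c hc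
    have hb1 := measure_eq_zero_iff_ae_notMem.mp (boundary_null hR hp μ (philev g (K * c)))
    have hb2 := measure_eq_zero_iff_ae_notMem.mp (boundary_null hR₀ hp μ₀ (philev g c))
    filter_upwards [hlev' c, hb1, hb2] with x hx h1 h2
    have h1' : quadForm S (x - μ) ≠ philev g (K * c) := h1
    have h2' : quadForm S₀ (x - μ₀) ≠ philev g c := h2
    constructor
    · rintro ⟨hxB, hlt⟩
      refine ⟨hxB, ?_⟩
      have h3 : K * c < g (quadForm S (x - μ)) :=
        lt_of_lt_philev hmono (quad_nonneg hR _) hlt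
      have h4 := (hx.mp ⟨hxB, h3⟩).2
      exact lt_of_le_of_ne (le_philev (hbddlev c hc) (quad_nonneg hR₀ _) h4) h2'
    · rintro ⟨hxB, hlt⟩
      refine ⟨hxB, ?_⟩
      have h3 : c < g (quadForm S₀ (x - μ₀)) :=
        lt_of_lt_philev hmono (quad_nonneg hR₀ _) hlt
      have h4 := (hx.mpr ⟨hxB, h3⟩).2
      exact lt_of_le_of_ne
        (le_philev (hbddlev (K * c) (mul_pos hKpos hc)) (quad_nonneg hR _) h4) h1'
  -- choice of base index n₁
  obtain ⟨n₂, hn₂⟩ := (ht_lim.eventually_lt_const hρpos).exists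
  set n₁ := max N n₂ with hn₁def
  have hn₁N : N ≤ n₁ := le_max_left _ _
  have ht_n₁ : t n₁ < ρ := lt_of_le_of_lt (ht_anti.antitone (le_max_right _ _)) hn₂
  have hu_lb : ∀ n, n₁ ≤ n → t (n + 1) ≤ philev g (γ n) := fun n hn =>
    le_philev (hbddlev _ (hγpos n (le_trans hn₁N hn))) (ht_pos (n + 1)).le (ht_incr n)
  have hu_ub : ∀ n, philev g (γ n) ≤ t n := fun n =>
    philev_le hmono (ht_pos n).le (le_refl (g (t n)))
  have hu_ltρ : ∀ n, n₁ ≤ n → philev g (γ n) < ρ := fun n hn =>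
    lt_of_le_of_lt (le_trans (hu_ub n) (ht_anti.antitone hn)) ht_n₁
  have hu_pos : ∀ n, n₁ ≤ n → 0 < philev g (γ n) := fun n hn =>
    lt_of_lt_of_le (ht_pos (n + 1)) (hu_lb n hn)
  -- CASE K > 1 : direct contradiction
  rcases lt_or_ge 1 K with hK1 | hKle
  · have hev : ∀ᶠ n in atTop, γs < K * γ n := by
      have hlim : Tendsto (fun n => K * γ n) atTop (nhds (K * γs)) := hγ_tendsto.const_mul K
      have hlt : γs < K * γs := by nlinarith
      exact hlim.eventually_const_lt hlt
    obtain ⟨n, hn, hn₁le⟩ := (hev.and (eventually_ge_atTop n₁)).exists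
    have hLHSnull : volume {x | x ∈ B ∧ K * γ n < g (quadForm S (x - μ))} = 0 := by
      apply measure_mono_null (t := {x | quadForm S (x - μ) = 0})
      · rintro x ⟨_, hgt⟩
        have hq0 := quad_nonneg hR (x - μ)
        rcases eq_or_lt_of_le hq0 with h | h
        · exact h.symm
        · exact absurd (lt_trans (hg_lt_sup _ h) hn) (not_lt.mpr hgt.le)
      · exact boundary_null hR hp μ 0
    have hRHSnull : volume {x | x ∈ B ∧ γ n < g (quadForm S₀ (x - μ₀))} = 0 :=
      null_of_ae_iff (hlev' (γ n)) hLHSnull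
    have hOsub : {x | quadForm S₀ (x - μ₀) < min ρ (t (n + 1))}
        ⊆ {x | x ∈ B ∧ γ n < g (quadForm S₀ (x - μ₀))} := by
      intro x hx
      have hx' : quadForm S₀ (x - μ₀) < min ρ (t (n + 1)) := hx
      refine ⟨lt_of_lt_of_le hx' (min_le_left _ _), ?_⟩
      have h5 : quadForm S₀ (x - μ₀) ≤ t (n + 1) :=
        (lt_of_lt_of_le hx' (min_le_right _ _)).le
      exact lt_of_lt_of_le (ht_incr n) (hmono (quad_nonneg hR₀ _) (ht_pos (n + 1)).le h5)
    have hOopen := ell_isOpen S₀ μ₀ (min ρ (t (n + 1)))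
    have hOne : μ₀ ∈ {x | quadForm S₀ (x - μ₀) < min ρ (t (n + 1))} := by
      show quadForm S₀ (μ₀ - μ₀) < _
      rw [sub_self, quad_zero]
      exact lt_min hρpos (ht_pos (n + 1))
    exact absurd (measure_mono_null hOsub hRHSnull)
      (hOopen.measure_pos volume ⟨μ₀, hOne⟩).ne'
  -- CASE K ≤ 1 : ellipsoid identification
  · set u := philev g (γ n₁) with hudef
    set r := philev g (K * γ n₁) with hrdef
    have hγn₁pos := hγpos n₁ hn₁N
    have hKγpos : 0 < K * γ n₁ := mul_pos hKpos hγn₁pos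
    have hr_lb : t (n₁ + 1) ≤ r := by
      apply le_philev (hbddlev _ hKγpos) (ht_pos _).le
      have : K * γ n₁ ≤ γ n₁ := by nlinarith
      exact lt_of_le_of_lt this (ht_incr n₁)
    have hrpos : 0 < r := lt_of_lt_of_le (ht_pos _) hr_lb
    have hupos : 0 < u := hu_pos n₁ (le_refl _)
    have huρ : u < ρ := hu_ltρ n₁ (le_refl _)
    set X := {x : EuclideanSpace ℝ (Fin p) | quadForm S (x - μ) < r} with hXdef
    set Y := {x : EuclideanSpace ℝ (Fin p) | quadForm S₀ (x - μ₀) < u} with hYdef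
    set C := {x : EuclideanSpace ℝ (Fin p) | quadForm S₀ (x - μ₀) ≤ u} with hCdef
    have hYB : Y ⊆ B := fun x hx =>
      show quadForm S₀ (x - μ₀) < ρ from lt_trans hx huρ
    have hCB : C ⊆ B := fun x hx =>
      show quadForm S₀ (x - μ₀) < ρ from lt_of_le_of_lt hx huρ
    have hYC : Y ⊆ C := fun x hx =>
      show quadForm S₀ (x - μ₀) ≤ u from le_of_lt hx
    have hiffY : ∀ᵐ x, (x ∈ X ∩ B ↔ x ∈ Y) := by
      filter_upwards [hlev (γ n₁) hγn₁pos] with x hx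
      constructor
      · rintro ⟨hxX, hxB⟩
        exact (hx.mp ⟨hxB, hxX⟩).2
      · intro hxY
        have := hx.mpr ⟨hYB hxY, hxY⟩
        exact ⟨this.2, this.1⟩
    have hμ₀Y : μ₀ ∈ Y := by
      show quadForm S₀ (μ₀ - μ₀) < u
      rw [sub_self, quad_zero]
      exact hupos
    -- X ∩ B ⊆ C
    have hXBC : X ∩ B ⊆ C := by
      have hnull : volume ((X ∩ B) \ C) = 0 := by
        apply measure_mono_null (t := {x | ¬ (x ∈ X ∩ B ↔ x ∈ Y)})
        · rintro x ⟨hx1, hx2⟩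
          intro hiff
          exact hx2 (hYC (hiff.mp hx1))
        · exact ae_iff.mp hiffY
      have hopen : IsOpen ((X ∩ B) \ C) :=
        ((ell_isOpen S μ r).inter hBopen).sdiff (ellC_isClosed S₀ μ₀ u)
      exact diff_eq_empty.mp (null_open_empty hopen hnull)
    -- X ⊆ B by connectedness
    have hXB : X ⊆ B := by
      have hXBne : (X ∩ B).Nonempty := by
        by_contra hne'
        rw [not_nonempty_iff_eq_empty] at hne'
        have hPnull : volume {x | x ∈ X ∩ B} = 0 := by
          have : {x | x ∈ X ∩ B} = (∅ : Set (EuclideanSpace ℝ (Fin p))) := by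
            rw [← hne']; rfl
          rw [this, measure_empty]
        have hYnull : volume {x | x ∈ Y} = 0 := null_of_ae_iff hiffY hPnull
        exact absurd hYnull ((ell_isOpen S₀ μ₀ u).measure_pos volume ⟨μ₀, hμ₀Y⟩).ne'
      by_contra hXnB
      obtain ⟨z, hzX, hzB⟩ := not_subset.mp hXnB
      have hXpc : IsPreconnected X := (ell_convex hR μ r).isPreconnected
      obtain ⟨w, hwX, hwB, hwC⟩ := hXpc B Cᶜ hBopen (ellC_isClosed S₀ μ₀ u).isOpen_compl
        (fun x hx => by
          by_cases hxB : x ∈ B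
          · exact Or.inl hxB
          · exact Or.inr fun hxC => hxB (hCB hxC))
        hXBne ⟨z, hzX, fun hzC => hzB (hCB hzC)⟩
      exact hwC (hXBC ⟨hwX, hwB⟩)
    have hXinter : X ∩ B = X := inter_eq_left.mpr hXB
    have hiffXY : ∀ᵐ x, (x ∈ X ↔ x ∈ Y) := by
      filter_upwards [hiffY] with x hx
      rw [← hXinter]
      exact hx
    -- closure equality
    have hXsubclY : X ⊆ closure Y := by
      apply ae_open_subset_closure (ell_isOpen S μ r)
      apply measure_mono_null (t := {x | ¬ (x ∈ X ↔ x ∈ Y)})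
      · rintro x ⟨hx1, hx2⟩ hiff
        exact hx2 (hiff.mp hx1)
      · exact ae_iff.mp hiffXY
    have hYsubclX : Y ⊆ closure X := by
      apply ae_open_subset_closure (ell_isOpen S₀ μ₀ u)
      apply measure_mono_null (t := {x | ¬ (x ∈ X ↔ x ∈ Y)})
      · rintro x ⟨hx1, hx2⟩ hiff
        exact hx2 (hiff.mpr hx1)
      · exact ae_iff.mp hiffXY
    have hclX : closure X = {x | quadForm S (x - μ) ≤ r} := closure_ell hR μ hrpos
    have hclY : closure Y = C := closure_ell hR₀ μ₀ hupos
    have hCC : {x : EuclideanSpace ℝ (Fin p) | quadForm S (x - μ) ≤ r} = C := by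
      rw [← hclX, ← hclY]
      apply Subset.antisymm
      · exact closure_minimal hXsubclY isClosed_closure
      · exact closure_minimal hYsubclX isClosed_closure
    -- centers coincide
    have hμeq : μ = μ₀ := by
      by_contra hμne
      set τ := μ - μ₀ with hτdef
      have hτ : τ ≠ 0 := sub_ne_zero.mpr hμne
      have hqτ : 0 < quadForm S₀ τ := quad_pos hR₀ hτ
      have hiter : ∀ j : ℕ, quadForm S₀ ((μ₀ - (2 * (j : ℝ)) • τ) - μ₀) ≤ u := by
        intro j
        induction j with
        | zero =>
          simp only [Nat.cast_zero, mul_zero, zero_smul, sub_zero, sub_self, quad_zero]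
          exact hupos.le
        | succ j ih =>
          set xj := μ₀ - (2 * (j : ℝ)) • τ with hxjdef
          have hx1 : xj ∈ C := ih
          have hx2 : quadForm S (xj - μ) ≤ r := by
            have : xj ∈ {x | quadForm S (x - μ) ≤ r} := by rw [hCC]; exact hx1
            exact this
          have hy : quadForm S (((2:ℝ) • μ - xj) - μ) ≤ r := by
            have heq : ((2:ℝ) • μ - xj) - μ = -(xj - μ) := by
              rw [two_smul]; abel
            rw [heq, quad_neg]
            exact hx2
          have hy' : (2:ℝ) • μ - xj ∈ C := by
            rw [← hCC]
            exact hy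
          have hz : quadForm S₀ (((2:ℝ) • μ₀ - ((2:ℝ) • μ - xj)) - μ₀) ≤ u := by
            have heq : ((2:ℝ) • μ₀ - ((2:ℝ) • μ - xj)) - μ₀ = -(((2:ℝ) • μ - xj) - μ₀) := by
              rw [two_smul]; abel
            rw [heq, quad_neg]
            exact hy'
          have hzeq : (2:ℝ) • μ₀ - ((2:ℝ) • μ - xj) = μ₀ - (2 * ((j:ℝ) + 1)) • τ := by
            rw [hxjdef, hτdef]
            module
          push_cast
          rw [← hzeq]
          exact hz
      obtain ⟨j, hj⟩ := exists_nat_gt (u / quadForm S₀ τ)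
      have hiterj := hiter (j + 1)
      have heq2 : (μ₀ - (2 * ((j + 1 : ℕ) : ℝ)) • τ) - μ₀ = -((2 * ((j + 1 : ℕ) : ℝ)) • τ) := by
        abel
      rw [heq2, quad_neg, quad_smul] at hiterj
      have hju : u < (j : ℝ) * quadForm S₀ τ := by
        rw [div_lt_iff₀ hqτ] at hj
        linarith
      have hsq : (j : ℝ) ≤ (2 * ((j + 1 : ℕ) : ℝ)) ^ 2 := by
        push_cast
        nlinarith [sq_nonneg (j : ℝ)]
      nlinarith [mul_le_mul_of_nonneg_right hsq hqτ.le]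
    have hμeq' : μ₀ = μ := hμeq.symm
    subst hμeq'
    -- proportionality of quadratic forms
    have hkey : ∀ w, quadForm S₀ w ≤ u → quadForm S w ≤ r := by
      intro w hw
      have h1 : μ₀ + w ∈ C := by
        show quadForm S₀ (μ₀ + w - μ₀) ≤ u
        rw [add_sub_cancel_left]
        exact hw
      have h2 : μ₀ + w ∈ {x | quadForm S (x - μ₀) ≤ r} := by rw [hCC]; exact h1
      have h3 : quadForm S (μ₀ + w - μ₀) ≤ r := h2
      rwa [add_sub_cancel_left] at h3
    have hkey' : ∀ w, quadForm S w ≤ r → quadForm S₀ w ≤ u := by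
      intro w hw
      have h1 : μ₀ + w ∈ {x | quadForm S (x - μ₀) ≤ r} := by
        show quadForm S (μ₀ + w - μ₀) ≤ r
        rw [add_sub_cancel_left]
        exact hw
      have h2 : μ₀ + w ∈ C := by rw [← hCC]; exact h1
      have h3 : quadForm S₀ (μ₀ + w - μ₀) ≤ u := h2
      rwa [add_sub_cancel_left] at h3
    have hquad : ∀ v, u * quadForm S v = r * quadForm S₀ v := by
      intro v
      rcases eq_or_ne v 0 with rfl | hv
      · rw [quad_zero, quad_zero, mul_zero, mul_zero]
      · have ha := quad_pos hR hv
        have hb := quad_pos hR₀ hv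
        have h1 : u * quadForm S v ≤ r * quadForm S₀ v := by
          set s := Real.sqrt (u / quadForm S₀ v) with hsdef
          have hs2 : s ^ 2 = u / quadForm S₀ v := Real.sq_sqrt (by positivity)
          have hw : quadForm S₀ (s • v) ≤ u := by
            rw [quad_smul, hs2, div_mul_cancel₀ _ hb.ne']
          have h2 := hkey _ hw
          rw [quad_smul, hs2] at h2
          rw [div_mul_eq_mul_div, div_le_iff₀ hb] at h2
          linarith
        have h2 : r * quadForm S₀ v ≤ u * quadForm S v := by
          set s := Real.sqrt (r / quadForm S v) with hsdef
          have hs2 : s ^ 2 = r / quadForm S v := Real.sq_sqrt (by positivity)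
          have hw : quadForm S (s • v) ≤ r := by
            rw [quad_smul, hs2, div_mul_cancel₀ _ ha.ne']
          have h3 := hkey' _ hw
          rw [quad_smul, hs2] at h3
          rw [div_mul_eq_mul_div, div_le_iff₀ ha] at h3
          linarith
        linarith
    set κ := r / u with hκdef
    have hκpos : 0 < κ := div_pos hrpos hupos
    have hqκ : ∀ v, quadForm S v = κ * quadForm S₀ v := by
      intro v
      rw [hκdef, div_mul_eq_mul_div, eq_div_iff hupos.ne']
      linarith [hquad v]
    -- the radius relation for all n ≥ n₁
    have hdagger : ∀ n, n₁ ≤ n →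
        min ρ (philev g (K * γ n) / κ) = philev g (γ n) := by
      intro n hn
      have hγnpos := hγpos n (le_trans hn₁N hn)
      apply radius_unique hp hR₀ μ₀
        (le_min hρpos.le (div_nonneg (philev_nonneg g _) hκpos.le))
        (philev_nonneg g (γ n))
      rw [← ae_iff]
      filter_upwards [hlev (γ n) hγnpos] with x hx
      constructor
      · intro h
        rw [lt_min_iff] at h
        have hxB : x ∈ B := h.1
        have h2 : quadForm S (x - μ₀) < philev g (K * γ n) := by
          rw [hqκ]
          rw [lt_div_iff₀ hκpos] at h
          · linarith [h.2]
        exact (hx.mp ⟨hxB, h2⟩).2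
      · intro h
        have hxB : x ∈ B := lt_trans h (hu_ltρ n hn)
        have h2 := (hx.mpr ⟨hxB, h⟩).2
        rw [hqκ] at h2
        rw [lt_min_iff]
        refine ⟨hxB, ?_⟩
        rw [lt_div_iff₀ hκpos]
        linarith
    have hstar : ∀ n, n₁ ≤ n → philev g (K * γ n) / κ = philev g (γ n) := by
      intro n hn
      have hd := hdagger n hn
      rcases le_or_gt ρ (philev g (K * γ n) / κ) with hge | hlt
      · rw [min_eq_left hge] at hd
        exact absurd hd (ne_of_gt (hu_ltρ n hn))
      · rwa [min_eq_right hlt.le] at hd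
    -- split on K = 1 vs K < 1
    rcases eq_or_lt_of_le hKle with hK1 | hK1
    · -- K = 1 forces κ = 1 and S = S₀
      have h1 := hstar n₁ (le_refl _)
      rw [hK1, one_mul, ← hudef] at h1
      have hκ1 : κ = 1 := by
        have h2 := (div_eq_iff hκpos.ne').mp h1
        have h3 : u * κ = u * 1 := by linarith
        exact mul_left_cancel₀ hupos.ne' h3
      have hSeq : S = S₀ := quad_determines hS hS₀ (fun v => by rw [hqκ v, hκ1, one_mul])
      exact hne (by rw [hSeq])
    · -- K < 1 : contradiction from shrinking radii
      have hKγs_lt : K * γs < γs := by nlinarith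
      have hKγs_lt' : K * γs < ⨆ n, γ n := by rw [← hγs]; exact hKγs_lt
      obtain ⟨m, hm⟩ := exists_lt_of_lt_ciSup hKγs_lt'
      have hrlb : ∀ n, n₁ ≤ n → t (m + 1) ≤ philev g (K * γ n) := by
        intro n hn
        apply le_philev (hbddlev _ (mul_pos hKpos (hγpos n (le_trans hn₁N hn))))
          (ht_pos (m + 1)).le
        have h1 : K * γ n ≤ K * γs := mul_le_mul_of_nonneg_left (hγ_le n) hKpos.le
        exact lt_of_le_of_lt h1 (lt_trans hm (hγ_mono (Nat.lt_succ_self m)))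
      set δ := min ρ (t (m + 1) / κ) with hδdef
      have hδpos : 0 < δ := lt_min hρpos (div_pos (ht_pos (m + 1)) hκpos)
      have hδle : ∀ n, n₁ ≤ n → δ ≤ philev g (γ n) := by
        intro n hn
        rw [← hdagger n hn]
        exact min_le_min (le_refl ρ) ((div_le_div_iff_of_pos_right hκpos).mpr (hrlb n hn))
      obtain ⟨n₅, hn₅⟩ := (ht_lim.eventually_lt_const hδpos).exists
      have h1 : δ ≤ philev g (γ (max n₁ n₅)) := hδle _ (le_max_left _ _)
      have h2 : philev g (γ (max n₁ n₅)) ≤ t (max n₁ n₅) := hu_ub _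
      have h3 : t (max n₁ n₅) ≤ t n₅ := ht_anti.antitone (le_max_right _ _)
      linarith
end
end

section
/- Let λ be a σ-finite measure on ℝ^p, T = (T_1,…,T_d) : ℝ^p → ℝ^d and h : ℝ^p → [0,∞) Borel measurable, and let A ⊆ ℝ^p be Borel. Assume that for every a ∈ ℝ^d with a ≠ 0 and every b ∈ ℝ, λ({x ∈ A : h(x) > 0 and ⟨a,T(x)⟩ ≠ b}) > 0. Let P be a probability measure on ℝ^p with P(A) > 0 and ∫_A |T_j| dP < ∞ for every j. Define D_A := {θ ∈ ℝ^d : ∫_A exp(⟨θ,T(x)⟩)·h(x) λ(dx) < ∞} and, for θ ∈ D_A, M(θ) := ⟨θ, ∫_A T dP⟩ − P(A)·log ∫_A exp(⟨θ,T⟩)·h dλ. Then M has at most one maximizer on D_A: if θ₁,θ₂ ∈ D_A satisfy M(θ_i) ≥ M(θ) for all θ ∈ D_A (i = 1,2), then θ₁ = θ₂. -/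
open MeasureTheory Set
open scoped ENNReal

noncomputable section

/-- The truncated partition function `Z(θ) = ∫_A exp(⟨θ, T x⟩) h x dλ(x)`. -/
def truncZ {p d : ℕ} (lam : Measure (EuclideanSpace ℝ (Fin p)))
    (T : EuclideanSpace ℝ (Fin p) → Fin d → ℝ) (h : EuclideanSpace ℝ (Fin p) → ℝ)
    (A : Set (EuclideanSpace ℝ (Fin p))) (θ : Fin d → ℝ) : ℝ≥0∞ :=
  ∫⁻ x in A, ENNReal.ofReal (Real.exp (∑ j, θ j * T x j) * h x) ∂lam

/-- The expected truncated log-likelihood (up to an additive constant)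
`M(θ) = ⟨θ, ∫_A T dP⟩ − P(A) · log Z(θ)`. -/
def truncM {p d : ℕ} (lam : Measure (EuclideanSpace ℝ (Fin p)))
    (T : EuclideanSpace ℝ (Fin p) → Fin d → ℝ) (h : EuclideanSpace ℝ (Fin p) → ℝ)
    (A : Set (EuclideanSpace ℝ (Fin p))) (P : Measure (EuclideanSpace ℝ (Fin p)))
    (θ : Fin d → ℝ) : ℝ :=
  (∑ j, θ j * ∫ x in A, T x j ∂P) - (P A).toReal * Real.log (truncZ lam T h A θ).toReal

theorem truncM_at_most_one_maximizer {p d : ℕ}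
    (lam : Measure (EuclideanSpace ℝ (Fin p))) [SigmaFinite lam]
    (T : EuclideanSpace ℝ (Fin p) → Fin d → ℝ) (h : EuclideanSpace ℝ (Fin p) → ℝ)
    (hT : Measurable T) (hh : Measurable h) (hh0 : 0 ≤ h)
    (A : Set (EuclideanSpace ℝ (Fin p))) (hA : MeasurableSet A)
    (hnc : ∀ a : Fin d → ℝ, a ≠ 0 → ∀ b : ℝ,
      0 < lam {x | x ∈ A ∧ 0 < h x ∧ (∑ j, a j * T x j) ≠ b})
    (P : Measure (EuclideanSpace ℝ (Fin p))) [IsProbabilityMeasure P]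
    (hPA : 0 < P A)
    (hint : ∀ j, IntegrableOn (fun x => T x j) A P)
    (θ₁ θ₂ : Fin d → ℝ)
    (hθ₁ : truncZ lam T h A θ₁ < ⊤) (hθ₂ : truncZ lam T h A θ₂ < ⊤)
    (hmax₁ : ∀ θ : Fin d → ℝ, truncZ lam T h A θ < ⊤ →
      truncM lam T h A P θ ≤ truncM lam T h A P θ₁)
    (hmax₂ : ∀ θ : Fin d → ℝ, truncZ lam T h A θ < ⊤ →
      truncM lam T h A P θ ≤ truncM lam T h A P θ₂) :
    θ₁ = θ₂ := by
  by_contra hne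
  -- notation
  have hTj : ∀ j, Measurable fun x => T x j := fun j => (measurable_pi_apply j).comp hT
  set m : Fin d → ℝ := fun j => (θ₁ j + θ₂ j) / 2 with hm
  set a : Fin d → ℝ := fun j => (θ₁ j - θ₂ j) / 2 with ha
  have ha0 : a ≠ 0 := by
    intro h0
    apply hne
    funext j
    have := congrFun h0 j
    simp only [ha, Pi.zero_apply] at this
    linarith
  set u : EuclideanSpace ℝ (Fin p) → ℝ := fun x => ∑ j, a j * T x j with hu
  have hum : Measurable u := Finset.measurable_sum _ fun j _ => (hTj j).const_mul _
  have hsum1 : ∀ x, (∑ j, θ₁ j * T x j) = u x + ∑ j, m j * T x j := by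
    intro x
    rw [hu, hm, ← Finset.sum_add_distrib]
    exact Finset.sum_congr rfl fun j _ => by simp only [ha]; ring
  have hsum2 : ∀ x, (∑ j, θ₂ j * T x j) = -u x + ∑ j, m j * T x j := by
    intro x
    rw [hu, hm, ← Finset.sum_neg_distrib, ← Finset.sum_add_distrib]
    exact Finset.sum_congr rfl fun j _ => by simp only [ha]; ring
  -- measures
  set ν : Measure (EuclideanSpace ℝ (Fin p)) := lam.restrict A with hν
  set w : EuclideanSpace ℝ (Fin p) → ℝ≥0∞ :=
    fun x => ENNReal.ofReal (Real.exp (∑ j, m j * T x j) * h x) with hw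
  have hwm : Measurable w :=
    ENNReal.measurable_ofReal.comp
      (((Finset.measurable_sum _ fun j _ => (hTj j).const_mul _).exp).mul hh)
  set μ : Measure (EuclideanSpace ℝ (Fin p)) := ν.withDensity w with hμ
  -- Z m and finiteness
  have hZm_def : truncZ lam T h A m = ∫⁻ x, w x ∂ν := rfl
  have hZm_lt : truncZ lam T h A m < ⊤ := by
    calc truncZ lam T h A m ≤ truncZ lam T h A θ₁ + truncZ lam T h A θ₂ := by
          rw [truncZ, truncZ, truncZ, ← lintegral_add_left]
          · refine lintegral_mono fun x => ?_
            have hle : Real.exp (∑ j, m j * T x j) * h x ≤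
                Real.exp (∑ j, θ₁ j * T x j) * h x + Real.exp (∑ j, θ₂ j * T x j) * h x := by
              have h1 : (∑ j, m j * T x j) ≤ max (∑ j, θ₁ j * T x j) (∑ j, θ₂ j * T x j) := by
                have e : (∑ j, m j * T x j) =
                    ((∑ j, θ₁ j * T x j) + ∑ j, θ₂ j * T x j) / 2 := by
                  rw [← Finset.sum_add_distrib, Finset.sum_div]
                  exact Finset.sum_congr rfl fun j _ => by simp only [hm]; ring
                rw [e]
                rcases max_cases (∑ j, θ₁ j * T x j) (∑ j, θ₂ j * T x j) with ⟨h', h''⟩ | ⟨h', h''⟩ <;>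
                  rw [h'] <;> linarith
              have h2 : Real.exp (∑ j, m j * T x j) ≤
                  Real.exp (∑ j, θ₁ j * T x j) + Real.exp (∑ j, θ₂ j * T x j) := by
                calc Real.exp (∑ j, m j * T x j)
                    ≤ Real.exp (max (∑ j, θ₁ j * T x j) (∑ j, θ₂ j * T x j)) :=
                      Real.exp_le_exp.2 h1
                  _ ≤ _ := by
                      rcases max_cases (∑ j, θ₁ j * T x j) (∑ j, θ₂ j * T x j) with ⟨h', _⟩ | ⟨h', _⟩ <;>
                        rw [h'] <;> nlinarith [Real.exp_pos (∑ j, θ₁ j * T x j),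
                          Real.exp_pos (∑ j, θ₂ j * T x j)]
              calc Real.exp (∑ j, m j * T x j) * h x
                  ≤ (Real.exp (∑ j, θ₁ j * T x j) + Real.exp (∑ j, θ₂ j * T x j)) * h x :=
                    mul_le_mul_of_nonneg_right h2 (hh0 x)
                _ = _ := add_mul _ _ _
            calc ENNReal.ofReal (Real.exp (∑ j, m j * T x j) * h x)
                ≤ ENNReal.ofReal (Real.exp (∑ j, θ₁ j * T x j) * h x +
                    Real.exp (∑ j, θ₂ j * T x j) * h x) := ENNReal.ofReal_le_ofReal hle
              _ ≤ _ := ENNReal.ofReal_add_le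
          · exact ENNReal.measurable_ofReal.comp
              (((Finset.measurable_sum _ fun j _ => (hTj j).const_mul _).exp).mul hh)
      _ < ⊤ := ENNReal.add_lt_top.2 ⟨hθ₁, hθ₂⟩
  -- positivity of Z
  have hZpos : ∀ θ : Fin d → ℝ, 0 < truncZ lam T h A θ := by
    intro θ
    have hmeas : Measurable fun x => ENNReal.ofReal (Real.exp (∑ j, θ j * T x j) * h x) :=
      ENNReal.measurable_ofReal.comp
        (((Finset.measurable_sum _ fun j _ => (hTj j).const_mul _).exp).mul hh)
    rw [truncZ, lintegral_pos_iff_support hmeas]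
    have hB := hnc a ha0 0
    set B := {x | x ∈ A ∧ 0 < h x ∧ (∑ j, a j * T x j) ≠ 0} with hB'
    have hBsub : B ⊆ Function.support fun x =>
        ENNReal.ofReal (Real.exp (∑ j, θ j * T x j) * h x) := by
      intro x hx
      have : 0 < Real.exp (∑ j, θ j * T x j) * h x :=
        mul_pos (Real.exp_pos _) hx.2.1
      simp only [Function.mem_support, ne_eq, ENNReal.ofReal_eq_zero, not_le]
      exact this
    calc (0 : ℝ≥0∞) < lam B := hB
      _ = lam (B ∩ A) := by rw [inter_eq_self_of_subset_left fun x hx => hx.1]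
      _ = ν B := (Measure.restrict_apply' hA).symm
      _ ≤ _ := measure_mono hBsub
  have hμuniv : μ univ = truncZ lam T h A m := by
    rw [hμ, withDensity_apply _ MeasurableSet.univ, setLIntegral_univ, hZm_def]
  haveI : IsFiniteMeasure μ := ⟨by rw [hμuniv]; exact hZm_lt⟩
  haveI : NeZero μ := ⟨by
    intro h0
    have : μ univ = 0 := by rw [h0]; simp
    rw [hμuniv] at this
    exact absurd this (hZpos m).ne'⟩
  -- key lintegral identities
  have key : ∀ (s : ℝ) (θ : Fin d → ℝ),
      (∀ x, (∑ j, θ j * T x j) = s * u x + ∑ j, m j * T x j) →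
      (∫⁻ x, ENNReal.ofReal (Real.exp (s * u x)) ∂μ) = truncZ lam T h A θ := by
    intro s θ hid
    have hgm : Measurable fun x => ENNReal.ofReal (Real.exp (s * u x)) :=
      ENNReal.measurable_ofReal.comp ((hum.const_mul s).exp)
    rw [hμ, lintegral_withDensity_eq_lintegral_mul ν hwm hgm]
    refine lintegral_congr fun x => ?_
    simp only [Pi.mul_apply, hw]
    rw [← ENNReal.ofReal_mul (mul_nonneg (Real.exp_pos _).le (hh0 x))]
    congr 1
    rw [hid x, Real.exp_add]
    ring
  have key1 : (∫⁻ x, ENNReal.ofReal (Real.exp (u x)) ∂μ) = truncZ lam T h A θ₁ := by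
    have := key 1 θ₁ (fun x => by rw [hsum1 x]; ring)
    simpa using this
  have key2 : (∫⁻ x, ENNReal.ofReal (Real.exp (-u x)) ∂μ) = truncZ lam T h A θ₂ := by
    have := key (-1) θ₂ (fun x => by rw [hsum2 x]; ring)
    simpa using this
  -- integrability
  have hexp1 : Integrable (fun x => Real.exp (u x)) μ := by
    refine ⟨(hum.exp).aestronglyMeasurable, ?_⟩
    rw [hasFiniteIntegral_iff_ofReal (ae_of_all _ fun x => (Real.exp_pos _).le)]
    rw [key1]; exact hθ₁
  have hexp2 : Integrable (fun x => Real.exp (-u x)) μ := by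
    refine ⟨(hum.neg.exp).aestronglyMeasurable, ?_⟩
    rw [hasFiniteIntegral_iff_ofReal (ae_of_all _ fun x => (Real.exp_pos _).le)]
    rw [key2]; exact hθ₂
  have hui : Integrable u μ := by
    refine Integrable.mono' (hexp1.add hexp2) hum.aestronglyMeasurable
      (ae_of_all _ fun x => ?_)
    simp only [Pi.add_apply]
    rcases le_or_gt 0 (u x) with h' | h'
    · rw [Real.norm_eq_abs, abs_of_nonneg h']
      nlinarith [Real.add_one_le_exp (u x), Real.exp_pos (-u x)]
    · rw [Real.norm_eq_abs, abs_of_neg h']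
      nlinarith [Real.add_one_le_exp (-u x), Real.exp_pos (u x)]
  -- real values of Z
  set Z1 : ℝ := (truncZ lam T h A θ₁).toReal with hZ1
  set Z2 : ℝ := (truncZ lam T h A θ₂).toReal with hZ2
  set Zm : ℝ := (truncZ lam T h A m).toReal with hZm
  have hZ1pos : 0 < Z1 := ENNReal.toReal_pos (hZpos θ₁).ne' hθ₁.ne
  have hZ2pos : 0 < Z2 := ENNReal.toReal_pos (hZpos θ₂).ne' hθ₂.ne
  have hZmpos : 0 < Zm := ENNReal.toReal_pos (hZpos m).ne' hZm_lt.ne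
  -- averages
  have havg1 : (⨍ x, Real.exp (u x) ∂μ) = Zm⁻¹ * Z1 := by
    rw [average_eq, integral_eq_lintegral_of_nonneg_ae
      (ae_of_all _ fun x => (Real.exp_pos _).le) (hum.exp).aestronglyMeasurable, key1,
      measureReal_def, hμuniv]
    simp [hZ1, hZm, smul_eq_mul]
  have havg2 : (⨍ x, Real.exp (-u x) ∂μ) = Zm⁻¹ * Z2 := by
    rw [average_eq, integral_eq_lintegral_of_nonneg_ae (f := fun x => Real.exp (-u x))
      (ae_of_all _ fun x => (Real.exp_pos _).le) (hum.neg.exp).aestronglyMeasurable, key2,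
      measureReal_def, hμuniv]
    simp [hZ2, hZm, smul_eq_mul]
  -- Jensen
  rcases strictConvexOn_exp.ae_eq_const_or_map_average_lt Real.continuous_exp.continuousOn
      isClosed_univ (ae_of_all _ fun _ => mem_univ _) hui hexp1 with hconst | hlt
  · -- constant case contradicts hnc
    set c : ℝ := ⨍ x, u x ∂μ with hc
    have hconst' : ∀ᵐ x ∂ν, w x ≠ 0 → u x = c := by
      rw [← ae_withDensity_iff hwm]
      exact hconst
    rw [Filter.eventually_iff, mem_ae_iff] at hconst'
    have hBc := hnc a ha0 c
    set B := {x | x ∈ A ∧ 0 < h x ∧ (∑ j, a j * T x j) ≠ c} with hB'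
    have hBsub : B ⊆ {x | w x ≠ 0 → u x = c}ᶜ := by
      intro x hx
      simp only [mem_compl_iff, mem_setOf_eq, not_forall]
      refine ⟨?_, hx.2.2⟩
      simp only [hw, ne_eq, ENNReal.ofReal_eq_zero, not_le]
      exact mul_pos (Real.exp_pos _) hx.2.1
    have : ν B = 0 := measure_mono_null hBsub hconst'
    rw [hν, Measure.restrict_apply' hA, inter_eq_self_of_subset_left
      (fun x hx => hx.1)] at this
    exact absurd this hBc.ne'
  · -- strict case: contradiction with maximality
    have hle2 : Real.exp (⨍ x, -u x ∂μ) ≤ ⨍ x, Real.exp (-u x) ∂μ := by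
      have := convexOn_exp.map_average_le Real.continuous_exp.continuousOn isClosed_univ
        (ae_of_all μ fun _ => mem_univ _) hui.neg hexp2
      simpa using this
    rw [average_neg] at hle2
    rw [havg1] at hlt
    rw [havg2] at hle2
    set c : ℝ := ⨍ x, u x ∂μ with hc
    have hmul : 1 < (Zm⁻¹ * Z1) * (Zm⁻¹ * Z2) := by
      calc (1:ℝ) = Real.exp c * Real.exp (-c) := by rw [← Real.exp_add]; simp
        _ < (Zm⁻¹ * Z1) * (Zm⁻¹ * Z2) :=
          mul_lt_mul hlt hle2 (Real.exp_pos _)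
            (mul_pos (inv_pos.2 hZmpos) hZ1pos).le
    have hZZ : Zm ^ 2 < Z1 * Z2 := by
      have h2 := mul_lt_mul_of_pos_right hmul (by positivity : (0:ℝ) < Zm ^ 2)
      rw [one_mul] at h2
      calc Zm ^ 2 < Zm⁻¹ * Z1 * (Zm⁻¹ * Z2) * Zm ^ 2 := h2
        _ = Z1 * Z2 := by field_simp
    have hlog : 2 * Real.log Zm < Real.log Z1 + Real.log Z2 := by
      have := Real.log_lt_log (by positivity) hZZ
      rwa [Real.log_pow, Real.log_mul hZ1pos.ne' hZ2pos.ne', Nat.cast_ofNat] at this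
    -- M values
    have hPA' : 0 < (P A).toReal :=
      ENNReal.toReal_pos hPA.ne' (measure_ne_top P A)
    have hM12 : truncM lam T h A P θ₁ = truncM lam T h A P θ₂ :=
      le_antisymm (hmax₂ θ₁ hθ₁) (hmax₁ θ₂ hθ₂)
    have hMm := hmax₁ m hZm_lt
    have hlin : (∑ j, m j * ∫ x in A, T x j ∂P) =
        ((∑ j, θ₁ j * ∫ x in A, T x j ∂P) + ∑ j, θ₂ j * ∫ x in A, T x j ∂P) / 2 := by
      rw [← Finset.sum_add_distrib, Finset.sum_div]
      exact Finset.sum_congr rfl fun j _ => by simp only [hm]; ring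
    simp only [truncM] at hMm hM12
    rw [hlin] at hMm
    simp only [← hZ1, ← hZ2, ← hZm] at hMm hM12
    linarith [mul_lt_mul_of_pos_left hlog hPA', hMm, hM12]
end
end

section
/- Let μ₀, μ₁ ∈ ℝ^p, let Σ₀, Σ₁ be symmetric positive-definite real p×p matrices with det Σ₁ = det Σ₀, and let r > 0. Then P_{(μ₁,Σ₁)}(E(μ₀,Σ₀,r)) ≤ P_{(μ₀,Σ₀)}(E(μ₀,Σ₀,r)). In other words, among all parameters with the same determinant of the scatter matrix, the probability of the ellipsoid E(μ₀,Σ₀,r) is maximized at (μ₀,Σ₀). -/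
open MeasureTheory Matrix Filter Set
open scoped RealInnerProductSpace ENNReal

noncomputable section

open Classical in
/-- Kullback-Leibler divergence `KL(μ‖ν) = ∫ log (dμ/dν) dμ`, with value `+∞` if `μ` is not
absolutely continuous w.r.t. `ν` (or the integral diverges). -/
def KL {α : Type*} [MeasurableSpace α] (μ ν : Measure α) : EReal :=
  if μ ≪ ν ∧ Integrable (fun x => Real.log ((μ.rnDeriv ν x).toReal)) μ then
    ((∫ x, Real.log ((μ.rnDeriv ν x).toReal) ∂μ : ℝ) : EReal)
  else ⊤

/-- The ellipsoid `E(μ, S, r) = {x : (x-μ)ᵀ S⁻¹ (x-μ) ≤ r²}`. -/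
def ellipsoid {p : ℕ} (μ : EuclideanSpace ℝ (Fin p)) (S : Matrix (Fin p) (Fin p) ℝ)
    (r : ℝ) : Set (EuclideanSpace ℝ (Fin p)) :=
  {x | quadForm S (x - μ) ≤ r ^ 2}


lemma ofReal_max_zero (u : ℝ) : ENNReal.ofReal (max 0 u) = ENNReal.ofReal u := by
  rcases le_total u 0 with h | h
  · rw [max_eq_left h, ENNReal.ofReal_zero, ENNReal.ofReal_of_nonpos h]
  · rw [max_eq_right h]

open scoped MatrixOrder in
def Matrix.PosSemidef.sqrt {p : ℕ} {A : Matrix (Fin p) (Fin p) ℝ} (_ : A.PosSemidef) :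
    Matrix (Fin p) (Fin p) ℝ :=
  CFC.sqrt A

open scoped MatrixOrder in
lemma Matrix.PosSemidef.sqrt_mul_self {p : ℕ} {A : Matrix (Fin p) (Fin p) ℝ} (hA : A.PosSemidef) :
    hA.sqrt * hA.sqrt = A :=
  CFC.sqrt_mul_sqrt_self A hA.nonneg

open scoped MatrixOrder in
lemma Matrix.PosSemidef.posSemidef_sqrt {p : ℕ} {A : Matrix (Fin p) (Fin p) ℝ}
    (hA : A.PosSemidef) : hA.sqrt.PosSemidef :=
  (CFC.sqrt_nonneg A).posSemidef

lemma quadForm_eq_norm_sq {p : ℕ} {S : Matrix (Fin p) (Fin p) ℝ} (hS : S.PosDef)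
    (x : EuclideanSpace ℝ (Fin p)) :
    quadForm S x = ‖Matrix.toEuclideanLin (hS.inv.posSemidef.sqrt) x‖ ^ 2 := by
  have hmul : hS.inv.posSemidef.sqrt * hS.inv.posSemidef.sqrt = S⁻¹ :=
    hS.inv.posSemidef.sqrt_mul_self
  have hherm : (hS.inv.posSemidef.sqrt)ᴴ = hS.inv.posSemidef.sqrt :=
    hS.inv.posSemidef.posSemidef_sqrt.1
  set T := Matrix.toEuclideanLin (hS.inv.posSemidef.sqrt) with hT
  have hadj : T = LinearMap.adjoint T := by
    rw [hT, ← Matrix.toEuclideanLin_conjTranspose_eq_adjoint, hherm]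
  have hTT : Matrix.toEuclideanLin S⁻¹ x = T (T x) := by
    rw [← hmul, hT]
    simp [Matrix.toEuclideanLin_apply, Matrix.mulVec_mulVec]
  rw [quadForm, hTT]
  calc ⟪x, T (T x)⟫ = ⟪LinearMap.adjoint T x, T x⟫ :=
        (LinearMap.adjoint_inner_left T (T x) x).symm
    _ = ⟪T x, T x⟫ := by rw [← hadj]
    _ = ‖T x‖ ^ 2 := real_inner_self_eq_norm_sq _

lemma quadForm_nonneg {p : ℕ} {S : Matrix (Fin p) (Fin p) ℝ} (hS : S.PosDef)
    (v : EuclideanSpace ℝ (Fin p)) : 0 ≤ quadForm S v := by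
  rw [quadForm_eq_norm_sq hS]; positivity

lemma det_toEuclideanLin {p : ℕ} (M : Matrix (Fin p) (Fin p) ℝ) :
    LinearMap.det (Matrix.toEuclideanLin M) = M.det :=
  LinearMap.det_toLin (PiLp.basisFun 2 ℝ (Fin p)) M

lemma volume_quadForm_mem {p : ℕ} {S : Matrix (Fin p) (Fin p) ℝ} (hS : S.PosDef) (L : Set ℝ) :
    volume {x : EuclideanSpace ℝ (Fin p) | quadForm S x ∈ L}
      = ENNReal.ofReal (Real.sqrt S.det) * volume {x : EuclideanSpace ℝ (Fin p) | ‖x‖ ^ 2 ∈ L} := by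
  have hdet2 : hS.inv.posSemidef.sqrt.det * hS.inv.posSemidef.sqrt.det = S⁻¹.det := by
    rw [← Matrix.det_mul, hS.inv.posSemidef.sqrt_mul_self]
  have hdetinv : S⁻¹.det = S.det⁻¹ := by
    rw [Matrix.det_nonsing_inv, Ring.inverse_eq_inv']
  have hMnn : 0 ≤ hS.inv.posSemidef.sqrt.det := by
    rw [hS.inv.posSemidef.posSemidef_sqrt.1.det_eq_prod_eigenvalues]
    exact Finset.prod_nonneg fun i _ => by
      simpa using hS.inv.posSemidef.posSemidef_sqrt.eigenvalues_nonneg i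
  have hMpos : 0 < hS.inv.posSemidef.sqrt.det := by
    rcases hMnn.lt_or_eq with h | h
    · exact h
    · exfalso
      have : (0:ℝ) < S⁻¹.det := hS.inv.det_pos
      rw [← hdet2, ← h] at this
      simp at this
  have hsqrt : Real.sqrt S⁻¹.det = hS.inv.posSemidef.sqrt.det := by
    rw [← hdet2, Real.sqrt_mul_self hMnn]
  have hset : {x : EuclideanSpace ℝ (Fin p) | quadForm S x ∈ L} =
      (Matrix.toEuclideanLin (hS.inv.posSemidef.sqrt)) ⁻¹' {y | ‖y‖ ^ 2 ∈ L} := by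
    ext x
    simp [quadForm_eq_norm_sq hS, Set.mem_preimage]
  have hTdet : LinearMap.det (Matrix.toEuclideanLin (hS.inv.posSemidef.sqrt))
      = hS.inv.posSemidef.sqrt.det := det_toEuclideanLin _
  rw [hset, Measure.addHaar_preimage_linearMap volume (by rw [hTdet]; exact hMpos.ne') _]
  congr 1
  rw [hTdet, abs_of_pos (inv_pos.2 hMpos), ← hsqrt, ← Real.sqrt_inv, hdetinv, inv_inv]

lemma volume_quadForm_sub {p : ℕ} (S : Matrix (Fin p) (Fin p) ℝ)
    (μ : EuclideanSpace ℝ (Fin p)) (L : Set ℝ) :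
    volume {x : EuclideanSpace ℝ (Fin p) | quadForm S (x - μ) ∈ L}
      = volume {x : EuclideanSpace ℝ (Fin p) | quadForm S x ∈ L} := by
  have : {x : EuclideanSpace ℝ (Fin p) | quadForm S (x - μ) ∈ L}
      = (fun x => x + (-μ)) ⁻¹' {x | quadForm S x ∈ L} := by
    ext x; simp [sub_eq_add_neg]
  rw [this, measure_preimage_add_right]

theorem ellipsoid_prob_maximized_at_center {p : ℕ} (hp : 1 ≤ p) (g : ℝ → ℝ)
    (hmono : AntitoneOn g (Set.Ici 0))
    (hnorm : ∫ x : EuclideanSpace ℝ (Fin p), g (‖x‖ ^ 2) = 1)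
    (μ₀ μ₁ : EuclideanSpace ℝ (Fin p)) (S₀ S₁ : Matrix (Fin p) (Fin p) ℝ)
    (hS₀ : S₀.PosDef) (hS₁ : S₁.PosDef) (hdet : S₁.det = S₀.det)
    (r : ℝ) (hr : 0 < r) :
    ellMeasure g μ₁ S₁ (ellipsoid μ₀ S₀ r) ≤ ellMeasure g μ₀ S₀ (ellipsoid μ₀ S₀ r) := by
  classical
  set c : ℝ := (Real.sqrt S₀.det)⁻¹ with hcdef
  have hc : 0 < c := inv_pos.2 (Real.sqrt_pos.2 hS₀.det_pos)
  set h : ℝ → ℝ := fun u => g (max u 0) with hhdef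
  have h_anti : Antitone h := fun u v huv =>
    hmono (le_max_right u 0) (le_max_right v 0) (max_le_max huv le_rfl)
  have h_meas : Measurable h := h_anti.measurable
  have contq : ∀ (S : Matrix (Fin p) (Fin p) ℝ) (μ : EuclideanSpace ℝ (Fin p)),
      Continuous fun x : EuclideanSpace ℝ (Fin p) => quadForm S (x - μ) := by
    intro S μ
    have hT : Continuous (Matrix.toEuclideanLin S⁻¹) :=
      LinearMap.continuous_of_finiteDimensional _
    exact Continuous.inner (continuous_id.sub continuous_const)
      (hT.comp (continuous_id.sub continuous_const))
  have hE : MeasurableSet (ellipsoid μ₀ S₀ r) :=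
    (contq S₀ μ₀).measurable (measurableSet_Iic (a := r ^ 2))
  have hdens : ∀ (μ : EuclideanSpace ℝ (Fin p)) (S : Matrix (Fin p) (Fin p) ℝ)
      (hS : S.PosDef), S.det = S₀.det → ∀ x,
      ENNReal.ofReal (ellDensity g μ S x)
        = ENNReal.ofReal (max 0 (c * h (quadForm S (x - μ)))) := by
    intro μ S hS hSdet x
    rw [ofReal_max_zero]
    congr 1
    rw [ellDensity, hSdet, hhdef]
    simp only []
    rw [max_eq_left (quadForm_nonneg hS _)]
  have Fmeas : ∀ (μ : EuclideanSpace ℝ (Fin p)) (S : Matrix (Fin p) (Fin p) ℝ),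
      Measurable fun x : EuclideanSpace ℝ (Fin p) => max 0 (c * h (quadForm S (x - μ))) :=
    fun μ S => measurable_const.max ((h_meas.comp (contq S μ).measurable).const_mul c)
  rw [ellMeasure, ellMeasure, withDensity_apply _ hE, withDensity_apply _ hE]
  rw [setLIntegral_congr_fun hE (fun x _ => hdens μ₁ S₁ hS₁ hdet x),
    setLIntegral_congr_fun hE (fun x _ => hdens μ₀ S₀ hS₀ rfl x)]
  rw [lintegral_eq_lintegral_meas_le _ (Eventually.of_forall fun x => le_max_left 0 _)
      (Fmeas μ₁ S₁).aemeasurable,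
    lintegral_eq_lintegral_meas_le _ (Eventually.of_forall fun x => le_max_left 0 _)
      (Fmeas μ₀ S₀).aemeasurable]
  refine lintegral_mono_ae ?_
  rw [ae_restrict_iff' measurableSet_Ioi]
  filter_upwards with t ht
  set L : Set ℝ := {u | t / c ≤ h u} ∩ Ici 0 with hLdef
  have hL : MeasurableSet L := (h_meas measurableSet_Ici).inter measurableSet_Ici
  have hsets : ∀ (μ : EuclideanSpace ℝ (Fin p)) (S : Matrix (Fin p) (Fin p) ℝ)
      (hS : S.PosDef),
      {a : EuclideanSpace ℝ (Fin p) | t ≤ max 0 (c * h (quadForm S (a - μ)))}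
        = {a | quadForm S (a - μ) ∈ L} := by
    intro μ S hS
    ext a
    simp only [mem_setOf_eq, hLdef, mem_inter_iff, mem_Ici]
    constructor
    · intro hta
      rcases le_max_iff.mp hta with h0 | hz
      · exact absurd h0 (not_le.2 ht)
      · exact ⟨(div_le_iff₀ hc).2 (by rw [mul_comm]; exact hz), quadForm_nonneg hS _⟩
    · rintro ⟨hs', -⟩
      refine le_trans ?_ (le_max_right 0 _)
      have := (div_le_iff₀ hc).1 hs'
      linarith [this]
  rw [hsets μ₁ S₁ hS₁, hsets μ₀ S₀ hS₀]
  have hA₁ : MeasurableSet {a : EuclideanSpace ℝ (Fin p) | quadForm S₁ (a - μ₁) ∈ L} :=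
    (contq S₁ μ₁).measurable hL
  have hA₀ : MeasurableSet {a : EuclideanSpace ℝ (Fin p) | quadForm S₀ (a - μ₀) ∈ L} :=
    (contq S₀ μ₀).measurable hL
  rw [Measure.restrict_apply hA₁, Measure.restrict_apply hA₀]
  have hvol : volume {a : EuclideanSpace ℝ (Fin p) | quadForm S₁ (a - μ₁) ∈ L}
      = volume {a : EuclideanSpace ℝ (Fin p) | quadForm S₀ (a - μ₀) ∈ L} := by
    rw [volume_quadForm_sub, volume_quadForm_sub, volume_quadForm_mem hS₁,
      volume_quadForm_mem hS₀, hdet]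
  by_cases hcase : r ^ 2 ∈ L
  · have hsub : ellipsoid μ₀ S₀ r ⊆ {a | quadForm S₀ (a - μ₀) ∈ L} := by
      intro a ha
      exact ⟨le_trans hcase.1 (h_anti ha), quadForm_nonneg hS₀ _⟩
    calc volume ({a : EuclideanSpace ℝ (Fin p) | quadForm S₁ (a - μ₁) ∈ L} ∩ ellipsoid μ₀ S₀ r)
        ≤ volume (ellipsoid μ₀ S₀ r) := measure_mono inter_subset_right
      _ = volume ({a : EuclideanSpace ℝ (Fin p) | quadForm S₀ (a - μ₀) ∈ L} ∩ ellipsoid μ₀ S₀ r) := by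
          rw [inter_eq_right.2 hsub]
  · have hsub : {a : EuclideanSpace ℝ (Fin p) | quadForm S₀ (a - μ₀) ∈ L} ⊆ ellipsoid μ₀ S₀ r := by
      rintro a ⟨h1, -⟩
      by_contra hq
      have hlt : r ^ 2 < quadForm S₀ (a - μ₀) := not_le.1 hq
      exact hcase ⟨le_trans h1 (h_anti hlt.le), sq_nonneg r⟩
    calc volume ({a : EuclideanSpace ℝ (Fin p) | quadForm S₁ (a - μ₁) ∈ L} ∩ ellipsoid μ₀ S₀ r)
        ≤ volume {a : EuclideanSpace ℝ (Fin p) | quadForm S₁ (a - μ₁) ∈ L} :=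
          measure_mono inter_subset_left
      _ = volume {a : EuclideanSpace ℝ (Fin p) | quadForm S₀ (a - μ₀) ∈ L} := hvol
      _ = volume ({a : EuclideanSpace ℝ (Fin p) | quadForm S₀ (a - μ₀) ∈ L} ∩ ellipsoid μ₀ S₀ r) := by
          rw [inter_eq_left.2 hsub]
end
end
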